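/- The category of pastures has all colimits of diagrams indexed by a small category: for every small category J and every functor F from J to the category of pastures, a colimit of F exists. -/
import Mathlib


universe u v w

/-- A pasture structure on a type `P`: a multiplication, a zero, a one,
an involution `neg`, and a ternary nullset relation `null a b c`
(meaning "`a + b + c = 0`"). -/
structure PastureStr (P : Type u) where
  mul : P → P → P
  zero : P
  one : P
  neg : P → P
  null : P → P → P → Prop

/-- `P` together with a `PastureStr` is a pasture: `P` is a commutative
monoid with zero whose nonzero elements form an abelian group, `neg` is an
involution fixing `0`, and the nullset is invariant under permutations,
invariant under multiplication, and satisfies `a + b + 0 = 0 ↔ a = -b`. -/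
structure PastureStr.IsPasture {P : Type u} (S : PastureStr P) : Prop where
  mul_comm : ∀ a b : P, S.mul a b = S.mul b a
  mul_assoc : ∀ a b c : P, S.mul (S.mul a b) c = S.mul a (S.mul b c)
  one_mul : ∀ a : P, S.mul S.one a = a
  zero_mul : ∀ a : P, S.mul S.zero a = S.zero
  one_ne_zero : S.one ≠ S.zero
  mul_ne_zero : ∀ a b : P, a ≠ S.zero → b ≠ S.zero → S.mul a b ≠ S.zero
  exists_inv : ∀ a : P, a ≠ S.zero → ∃ b : P, S.mul a b = S.one
  neg_neg : ∀ a : P, S.neg (S.neg a) = a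
  neg_zero : S.neg S.zero = S.zero
  null_swap_left : ∀ a b c : P, S.null a b c → S.null b a c
  null_swap_right : ∀ a b c : P, S.null a b c → S.null a c b
  null_mul : ∀ d a b c : P, S.null a b c → S.null (S.mul d a) (S.mul d b) (S.mul d c)
  null_zero : ∀ a b : P, S.null a b S.zero ↔ a = S.neg b

/-- A morphism of pastures: a multiplicative map preserving `0`, `1`,
the involution and the nullset. -/
structure PastureStr.IsHom {P : Type u} {P' : Type v} (S : PastureStr P) (T : PastureStr P')
    (f : P → P') : Prop where
  map_mul : ∀ a b : P, f (S.mul a b) = T.mul (f a) (f b)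
  map_zero : f S.zero = T.zero
  map_one : f S.one = T.one
  map_neg : ∀ a : P, f (S.neg a) = T.neg (f a)
  map_null : ∀ a b c : P, S.null a b c → T.null (f a) (f b) (f c)

/-- A bundled pasture: a carrier with a pasture structure satisfying the axioms. -/
structure Pasture : Type (u + 1) where
  carrier : Type u
  str : PastureStr carrier
  isPasture : str.IsPasture

/-- A morphism between bundled pastures. -/
structure PastureHom (A B : Pasture.{u}) : Type u where
  toFun : A.carrier → B.carrier
  isHom : PastureStr.IsHom A.str B.str toFun

theorem PastureHom.ext' {A B : Pasture.{u}} {f g : PastureHom A B}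
    (h : f.toFun = g.toFun) : f = g := by
  cases f; cases g; cases h; rfl

theorem PastureStr.IsHom.id' {P : Type u} (S : PastureStr P) :
    S.IsHom S (fun x => x) :=
  ⟨fun _ _ => rfl, rfl, rfl, fun _ => rfl, fun _ _ _ h => h⟩

theorem PastureStr.IsHom.comp' {P : Type u} {Q : Type v} {R : Type w}
    {S : PastureStr P} {T : PastureStr Q} {U : PastureStr R}
    {f : P → Q} {g : Q → R} (hf : S.IsHom T f) (hg : T.IsHom U g) :
    S.IsHom U (fun x => g (f x)) where
  map_mul a b := by
    show g (f (S.mul a b)) = U.mul (g (f a)) (g (f b))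
    rw [hf.map_mul, hg.map_mul]
  map_zero := by
    show g (f S.zero) = U.zero
    rw [hf.map_zero, hg.map_zero]
  map_one := by
    show g (f S.one) = U.one
    rw [hf.map_one, hg.map_one]
  map_neg a := by
    show g (f (S.neg a)) = U.neg (g (f a))
    rw [hf.map_neg, hg.map_neg]
  map_null a b c h := hg.map_null _ _ _ (hf.map_null _ _ _ h)

/-- The category of pastures, with morphisms of pastures as morphisms and
composition of functions as composition. -/
instance : CategoryTheory.Category Pasture.{u} where
  Hom A B := PastureHom A B
  id A := ⟨fun x => x, PastureStr.IsHom.id' A.str⟩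
  comp f g := ⟨fun x => g.toFun (f.toFun x), f.isHom.comp' g.isHom⟩
  id_comp _ := PastureHom.ext' rfl
  comp_id _ := PastureHom.ext' rfl
  assoc _ _ _ := PastureHom.ext' rfl

section Colim

open CategoryTheory

namespace PastureColim

/-- In a pasture, `x * (-y) = -(x * y)`. -/
theorem mul_neg' {P : Type w} {S : PastureStr P} (hS : S.IsPasture) (x y : P) :
    S.mul x (S.neg y) = S.neg (S.mul x y) := by
  have h0 : S.null (S.neg y) y S.zero := (hS.null_zero _ _).2 rfl
  have h1 := hS.null_mul x _ _ _ h0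
  have hz : S.mul x S.zero = S.zero := by rw [hS.mul_comm]; exact hS.zero_mul x
  rw [hz] at h1
  exact (hS.null_zero _ _).1 h1

theorem mul_zero' {P : Type w} {S : PastureStr P} (hS : S.IsPasture) (x : P) :
    S.mul x S.zero = S.zero := by rw [hS.mul_comm]; exact hS.zero_mul x

/-- Pasture homs reflect zero. -/
theorem hom_map_eq_zero {P : Type u} {P' : Type w} {S : PastureStr P} {T : PastureStr P'}
    {f : P → P'} (hS : S.IsPasture) (hT : T.IsPasture) (hf : S.IsHom T f) {x : P}
    (h : f x = T.zero) : x = S.zero := by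
  by_contra hx
  obtain ⟨y, hy⟩ := hS.exists_inv x hx
  apply hT.one_ne_zero
  have : f (S.mul x y) = T.mul (f x) (f y) := hf.map_mul x y
  rw [hy, hf.map_one, h, hT.zero_mul] at this
  exact this

variable {J : Type v} [SmallCategory J]

/-- Formal words over the diagram. -/
inductive Pre (F : J ⥤ Pasture.{max u v}) : Type (max u v)
  | of (j : J) (x : (F.obj j).carrier) : Pre F
  | one : Pre F
  | zero : Pre F
  | neg : Pre F → Pre F
  | mul : Pre F → Pre F → Pre F

variable {F : J ⥤ Pasture.{max u v}}

/-- The relation by which we quotient. -/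
inductive Rel (F : J ⥤ Pasture.{max u v}) : Pre F → Pre F → Prop
  | refl (x) : Rel F x x
  | symm {x y} : Rel F x y → Rel F y x
  | trans {x y z} : Rel F x y → Rel F y z → Rel F x z
  | map {j j'} (f : j ⟶ j') (x) : Rel F (.of j' ((F.map f).toFun x)) (.of j x)
  | of_mul (j) (x y) : Rel F (.of j ((F.obj j).str.mul x y)) (.mul (.of j x) (.of j y))
  | of_one (j) : Rel F (.of j (F.obj j).str.one) .one
  | of_zero (j) : Rel F (.of j (F.obj j).str.zero) .zero
  | of_neg (j) (x) : Rel F (.of j ((F.obj j).str.neg x)) (.neg (.of j x))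
  | mul_congr {x x' y y'} : Rel F x x' → Rel F y y' → Rel F (.mul x y) (.mul x' y')
  | neg_congr {x x'} : Rel F x x' → Rel F (.neg x) (.neg x')
  | mul_comm (x y) : Rel F (.mul x y) (.mul y x)
  | mul_assoc (x y z) : Rel F (.mul (.mul x y) z) (.mul x (.mul y z))
  | one_mul (x) : Rel F (.mul .one x) x
  | zero_mul (x) : Rel F (.mul .zero x) .zero
  | neg_neg (x) : Rel F (.neg (.neg x)) x
  | neg_zero : Rel F (.neg .zero) .zero
  | mul_neg (x y) : Rel F (.mul x (.neg y)) (.neg (.mul x y))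

variable (F)

abbrev Q : Type (max u v) := Quot (Rel F)

def mk (x : Pre F) : Q F := Quot.mk _ x

def negQ : Q F → Q F :=
  Quot.lift (fun x => mk F (.neg x)) (fun _ _ h => Quot.sound (Rel.neg_congr h))

def mulQ : Q F → Q F → Q F :=
  Quot.lift
    (fun x => Quot.lift (fun y => mk F (.mul x y))
      (fun _ _ h => Quot.sound (Rel.mul_congr (Rel.refl x) h)))
    (fun _ _ h => funext fun q => Quot.inductionOn q
      (fun y => Quot.sound (Rel.mul_congr h (Rel.refl y))))

theorem mk_mul (x y : Pre F) : mulQ F (mk F x) (mk F y) = mk F (.mul x y) := rfl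
theorem mk_neg (x : Pre F) : negQ F (mk F x) = mk F (.neg x) := rfl

theorem mulQ_comm (x y : Q F) : mulQ F x y = mulQ F y x := by
  induction x using Quot.inductionOn
  induction y using Quot.inductionOn
  exact Quot.sound (Rel.mul_comm _ _)

theorem mulQ_assoc (x y z : Q F) : mulQ F (mulQ F x y) z = mulQ F x (mulQ F y z) := by
  induction x using Quot.inductionOn
  induction y using Quot.inductionOn
  induction z using Quot.inductionOn
  exact Quot.sound (Rel.mul_assoc _ _ _)

theorem oneQ_mul (x : Q F) : mulQ F (mk F .one) x = x :=
  Quot.inductionOn x fun a => Quot.sound (Rel.one_mul a)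

theorem zeroQ_mul (x : Q F) : mulQ F (mk F .zero) x = mk F .zero :=
  Quot.inductionOn x fun a => Quot.sound (Rel.zero_mul a)

theorem mulQ_zero (x : Q F) : mulQ F x (mk F .zero) = mk F .zero := by
  rw [mulQ_comm]; exact zeroQ_mul F x

theorem negQ_negQ (x : Q F) : negQ F (negQ F x) = x :=
  Quot.inductionOn x fun a => Quot.sound (Rel.neg_neg a)

theorem negQ_zero : negQ F (mk F .zero) = mk F .zero := Quot.sound Rel.neg_zero

theorem mulQ_negQ (x y : Q F) : mulQ F x (negQ F y) = negQ F (mulQ F x y) := by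
  induction x using Quot.inductionOn
  induction y using Quot.inductionOn
  exact Quot.sound (Rel.mul_neg _ _)

theorem mk_rel {x y : Pre F} (h : Rel F x y) : mk F x = mk F y := Quot.sound h

instance : CommMonoid (Q F) where
  mul := mulQ F
  one := mk F .one
  mul_assoc := mulQ_assoc F
  one_mul := oneQ_mul F
  mul_one x := (mulQ_comm F x (mk F .one)).trans (oneQ_mul F x)
  mul_comm := mulQ_comm F

theorem mulQ_mulQ (a b c d : Q F) :
    mulQ F (mulQ F a b) (mulQ F c d) = mulQ F (mulQ F a c) (mulQ F b d) :=
  mul_mul_mul_comm a b c d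

open scoped Classical in
/-- The map to `Bool` recording (non)vanishing. -/
noncomputable def toB : Pre F → Bool
  | .of j x => if x = (F.obj j).str.zero then false else true
  | .one => true
  | .zero => false
  | .neg x => toB x
  | .mul x y => toB x && toB y

theorem toB_of_ne {j : J} {x : (F.obj j).carrier} (h : x ≠ (F.obj j).str.zero) :
    toB F (.of j x) = true := by simp [toB, h]

theorem toB_rel {x y : Pre F} (h : Rel F x y) : toB F x = toB F y := by
  induction h with
  | refl x => rfl
  | symm _ ih => exact ih.symm
  | trans _ _ ih₁ ih₂ => exact ih₁.trans ih₂
  | map f x =>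
    show toB F (.of _ _) = toB F (.of _ _)
    by_cases hx : x = (F.obj _).str.zero
    · subst hx
      simp [toB, (F.map f).isHom.map_zero]
    · have : (F.map f).toFun x ≠ (F.obj _).str.zero := fun h => hx
        (hom_map_eq_zero (F.obj _).isPasture (F.obj _).isPasture (F.map f).isHom h)
      simp [toB, hx, this]
  | of_mul j x y =>
    show toB F (.of _ _) = toB F (.mul (.of j x) (.of j y))
    have hP := (F.obj j).isPasture
    by_cases hx : x = (F.obj j).str.zero
    · subst hx; simp [toB, hP.zero_mul]
    · by_cases hy : y = (F.obj j).str.zero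
      · subst hy; simp [toB, mul_zero' hP]
      · simp [toB, hx, hy, hP.mul_ne_zero x y hx hy]
  | of_one j => simp [toB, (F.obj j).isPasture.one_ne_zero]
  | of_zero j => simp [toB]
  | of_neg j x =>
    show toB F (.of _ _) = toB F (.neg (.of j x))
    have hP := (F.obj j).isPasture
    by_cases hx : x = (F.obj j).str.zero
    · subst hx; simp [toB, hP.neg_zero]
    · have : (F.obj j).str.neg x ≠ (F.obj j).str.zero := fun h => by
        have := congrArg (F.obj j).str.neg h
        rw [hP.neg_neg, hP.neg_zero] at this
        exact hx this
      simp [toB, hx, this]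
  | mul_congr _ _ ih₁ ih₂ => simp only [toB]; rw [ih₁, ih₂]
  | neg_congr _ ih => exact ih
  | mul_comm x y => exact Bool.and_comm _ _
  | mul_assoc x y z => exact Bool.and_assoc _ _ _
  | one_mul x => exact Bool.true_and _
  | zero_mul x => exact Bool.false_and _
  | neg_neg x => rfl
  | neg_zero => rfl
  | mul_neg x y => rfl

noncomputable def κ : Q F → Bool := Quot.lift (toB F) fun _ _ h => toB_rel F h

theorem oneQ_ne_zeroQ : mk F .one ≠ mk F .zero := fun h => by
  have := congrArg (κ F) h
  simp [κ, mk, toB] at this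

theorem κ_eq_false {q : Q F} (h : q = mk F .zero) : κ F q = false := by
  rw [h]; rfl

/-- Dichotomy: every element of the quotient is zero or invertible. -/
theorem dichot' : ∀ w : Pre F, mk F w = mk F .zero ∨ ∃ r : Q F, mulQ F (mk F w) r = mk F .one := by
  intro w
  induction w with
  | of j x =>
    have hP := (F.obj j).isPasture
    by_cases hx : x = (F.obj j).str.zero
    · left; subst hx; exact Quot.sound (Rel.of_zero j)
    · right
      obtain ⟨y, hy⟩ := hP.exists_inv x hx
      refine ⟨mk F (.of j y), ?_⟩
      rw [mk_mul]
      calc mk F (.mul (.of j x) (.of j y)) = mk F (.of j ((F.obj j).str.mul x y)) :=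
            (Quot.sound (Rel.of_mul j x y)).symm
        _ = mk F (.of j (F.obj j).str.one) := by rw [hy]
        _ = mk F .one := Quot.sound (Rel.of_one j)
  | one => right; exact ⟨mk F .one, oneQ_mul F _⟩
  | zero => left; rfl
  | neg w ih =>
    rcases ih with h | ⟨r, hr⟩
    · left
      have : mk F (.neg w) = negQ F (mk F w) := rfl
      rw [this, h, negQ_zero]
    · right
      refine ⟨negQ F r, ?_⟩
      have h1 : mk F (Pre.neg w) = negQ F (mk F w) := rfl
      rw [h1, mulQ_comm, mulQ_negQ, mulQ_comm, mulQ_negQ, negQ_negQ, hr]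
  | mul w₁ w₂ ih₁ ih₂ =>
    have hsplit : mk F (.mul w₁ w₂) = mulQ F (mk F w₁) (mk F w₂) := rfl
    rcases ih₁ with h | ⟨r₁, hr₁⟩
    · left; rw [hsplit, h, zeroQ_mul]
    rcases ih₂ with h | ⟨r₂, hr₂⟩
    · left; rw [hsplit, h, mulQ_zero]
    right
    refine ⟨mulQ F r₁ r₂, ?_⟩
    rw [hsplit]
    calc mulQ F (mulQ F (mk F w₁) (mk F w₂)) (mulQ F r₁ r₂)
        = mulQ F (mulQ F (mk F w₁) r₁) (mulQ F (mk F w₂) r₂) := mulQ_mulQ F _ _ _ _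
      _ = mk F .one := by rw [hr₁, hr₂, oneQ_mul]

theorem dichot : ∀ q : Q F, q = mk F .zero ∨ ∃ r : Q F, mulQ F q r = mk F .one :=
  Quot.ind (dichot' F)

theorem mulQ_ne_zero {x y : Q F} (hx : x ≠ mk F .zero) (hy : y ≠ mk F .zero) :
    mulQ F x y ≠ mk F .zero := by
  rcases dichot F x with h | ⟨r, hr⟩; · exact absurd h hx
  rcases dichot F y with h | ⟨s, hs⟩; · exact absurd h hy
  intro h
  apply oneQ_ne_zeroQ F
  calc mk F .one = mulQ F (mulQ F x r) (mulQ F y s) := by rw [hr, hs, oneQ_mul]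
    _ = mulQ F (mulQ F x y) (mulQ F r s) := mulQ_mulQ F _ _ _ _
    _ = mk F .zero := by rw [h, zeroQ_mul]

theorem of_eq_zero {j : J} {x : (F.obj j).carrier} (h : mk F (.of j x) = mk F .zero) :
    x = (F.obj j).str.zero := by
  by_contra hx
  have := κ_eq_false F h
  simp [κ, mk, toB, hx] at this

/-- The nullset of the colimit. -/
def nullQ (x y z : Q F) : Prop :=
  (∃ (d : Q F) (j : J) (a b c : (F.obj j).carrier), (F.obj j).str.null a b c ∧
      x = mulQ F d (mk F (.of j a)) ∧ y = mulQ F d (mk F (.of j b)) ∧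
      z = mulQ F d (mk F (.of j c))) ∨
    (z = mk F .zero ∧ x = negQ F y) ∨ (y = mk F .zero ∧ x = negQ F z) ∨
    (x = mk F .zero ∧ y = negQ F z)

def str : PastureStr (Q F) where
  mul := mulQ F
  zero := mk F .zero
  one := mk F .one
  neg := negQ F
  null := nullQ F

theorem isPasture : (str F).IsPasture where
  mul_comm := mulQ_comm F
  mul_assoc := mulQ_assoc F
  one_mul := oneQ_mul F
  zero_mul := zeroQ_mul F
  one_ne_zero := oneQ_ne_zeroQ F
  mul_ne_zero _ _ := mulQ_ne_zero F
  exists_inv q hq := (dichot F q).resolve_left hq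
  neg_neg := negQ_negQ F
  neg_zero := negQ_zero F
  null_swap_left := by
    rintro x y z (⟨d, j, a, b, c, hn, hx, hy, hz⟩ | ⟨hz, hx⟩ | ⟨hy, hx⟩ | ⟨hx, hy⟩)
    · exact Or.inl ⟨d, j, b, a, c, (F.obj j).isPasture.null_swap_left a b c hn, hy, hx, hz⟩
    · exact Or.inr (Or.inl ⟨hz, by rw [hx, negQ_negQ]⟩)
    · exact Or.inr (Or.inr (Or.inr ⟨hy, hx⟩))
    · exact Or.inr (Or.inr (Or.inl ⟨hx, hy⟩))
  null_swap_right := by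
    rintro x y z (⟨d, j, a, b, c, hn, hx, hy, hz⟩ | ⟨hz, hx⟩ | ⟨hy, hx⟩ | ⟨hx, hy⟩)
    · exact Or.inl ⟨d, j, a, c, b, (F.obj j).isPasture.null_swap_right a b c hn, hx, hz, hy⟩
    · exact Or.inr (Or.inr (Or.inl ⟨hz, hx⟩))
    · exact Or.inr (Or.inl ⟨hy, hx⟩)
    · exact Or.inr (Or.inr (Or.inr ⟨hx, by rw [hy, negQ_negQ]⟩))
  null_mul := by
    rintro e x y z (⟨d, j, a, b, c, hn, hx, hy, hz⟩ | ⟨hz, hx⟩ | ⟨hy, hx⟩ | ⟨hx, hy⟩)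
    · subst hx; subst hy; subst hz
      exact Or.inl ⟨mulQ F e d, j, a, b, c, hn, (mulQ_assoc F e d _).symm,
        (mulQ_assoc F e d _).symm, (mulQ_assoc F e d _).symm⟩
    · subst hz; subst hx
      exact Or.inr (Or.inl ⟨mulQ_zero F e, mulQ_negQ F e y⟩)
    · subst hy; subst hx
      exact Or.inr (Or.inr (Or.inl ⟨mulQ_zero F e, mulQ_negQ F e z⟩))
    · subst hx; subst hy
      exact Or.inr (Or.inr (Or.inr ⟨mulQ_zero F e, mulQ_negQ F e z⟩))
  null_zero := by
    intro x y
    constructor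
    · intro h
      show x = negQ F y
      rcases h with ⟨d, j, a, b, c, hn, hx, hy, hz⟩ | ⟨_, hx⟩ | ⟨hy, hx⟩ | ⟨hx, hy⟩
      · by_cases hd : d = mk F .zero
        · rw [hx, hy, hd, zeroQ_mul, zeroQ_mul, negQ_zero]
        · have hc : mk F (.of j c) = mk F .zero := by
            by_contra hc
            exact mulQ_ne_zero F hd hc hz.symm
          have hc0 : c = (F.obj j).str.zero := of_eq_zero F hc
          subst hc0
          have hab : a = (F.obj j).str.neg b :=
            ((F.obj j).isPasture.null_zero a b).1 hn
          rw [hx, hy, hab, mk_rel F (Rel.of_neg j b), ← mk_neg, mulQ_negQ]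
      · exact hx
      · have hz0 : (str F).zero = mk F .zero := rfl
        rw [hx, hy, hz0]
      · have hz0 : (str F).zero = mk F .zero := rfl
        rw [hx, hy, hz0, negQ_zero, negQ_zero]
    · intro h
      exact Or.inr (Or.inl ⟨rfl, h⟩)

/-- The cocone maps. -/
def ι (j : J) : PastureHom (F.obj j) ⟨Q F, str F, isPasture F⟩ where
  toFun x := mk F (.of j x)
  isHom :=
    { map_mul := fun x y => Quot.sound (Rel.of_mul j x y)
      map_zero := Quot.sound (Rel.of_zero j)
      map_one := Quot.sound (Rel.of_one j)
      map_neg := fun x => Quot.sound (Rel.of_neg j x)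
      map_null := fun a b c h =>
        Or.inl ⟨mk F .one, j, a, b, c, h, (oneQ_mul F _).symm, (oneQ_mul F _).symm,
          (oneQ_mul F _).symm⟩ }

def cocone : Limits.Cocone F where
  pt := ⟨Q F, str F, isPasture F⟩
  ι :=
    { app := ι F
      naturality := fun _ _ f => PastureHom.ext' (funext fun x =>
        Quot.sound (Rel.map f x)) }

variable {sp : Pasture.{max u v}} (sι : ∀ j, PastureHom (F.obj j) sp)

def descFun (s : Limits.Cocone F) : Pre F → s.pt.carrier
  | .of j x => (s.ι.app j).toFun x
  | .one => s.pt.str.one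
  | .zero => s.pt.str.zero
  | .neg x => s.pt.str.neg (descFun s x)
  | .mul x y => s.pt.str.mul (descFun s x) (descFun s y)

theorem descFun_rel (s : Limits.Cocone F) {x y : Pre F} (h : Rel F x y) :
    descFun F s x = descFun F s y := by
  have hP := s.pt.isPasture
  induction h with
  | refl x => rfl
  | symm _ ih => exact ih.symm
  | trans _ _ ih₁ ih₂ => exact ih₁.trans ih₂
  | map f x =>
    have := congrArg PastureHom.toFun (s.ι.naturality f)
    exact congrFun this x
  | of_mul j x y => exact (s.ι.app j).isHom.map_mul x y
  | of_one j => exact (s.ι.app j).isHom.map_one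
  | of_zero j => exact (s.ι.app j).isHom.map_zero
  | of_neg j x => exact (s.ι.app j).isHom.map_neg x
  | mul_congr _ _ ih₁ ih₂ => simp only [descFun]; rw [ih₁, ih₂]
  | neg_congr _ ih => simp only [descFun]; rw [ih]
  | mul_comm x y => exact hP.mul_comm _ _
  | mul_assoc x y z => exact hP.mul_assoc _ _ _
  | one_mul x => exact hP.one_mul _
  | zero_mul x => exact hP.zero_mul _
  | neg_neg x => exact hP.neg_neg _
  | neg_zero => exact hP.neg_zero
  | mul_neg x y => exact mul_neg' hP _ _

def descQ (s : Limits.Cocone F) : Q F → s.pt.carrier :=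
  Quot.lift (descFun F s) fun _ _ h => descFun_rel F s h

theorem descQ_mul (s : Limits.Cocone F) (x y : Q F) :
    descQ F s (mulQ F x y) = s.pt.str.mul (descQ F s x) (descQ F s y) := by
  induction x using Quot.inductionOn
  induction y using Quot.inductionOn
  rfl

theorem descQ_neg (s : Limits.Cocone F) (x : Q F) :
    descQ F s (negQ F x) = s.pt.str.neg (descQ F s x) :=
  Quot.inductionOn x fun _ => rfl

def descHom (s : Limits.Cocone F) : PastureHom ⟨Q F, str F, isPasture F⟩ s.pt where
  toFun := descQ F s
  isHom :=
    { map_mul := descQ_mul F s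
      map_zero := rfl
      map_one := rfl
      map_neg := descQ_neg F s
      map_null := by
        have hP := s.pt.isPasture
        rintro x y z (⟨d, j, a, b, c, hn, hx, hy, hz⟩ | ⟨hz, hx⟩ | ⟨hy, hx⟩ | ⟨hx, hy⟩)
        · have hnull := (s.ι.app j).isHom.map_null a b c hn
          have := hP.null_mul (descQ F s d) _ _ _ hnull
          rw [hx, hy, hz, descQ_mul, descQ_mul, descQ_mul]
          exact this
        · rw [hx, hz, descQ_neg]
          exact (hP.null_zero _ _).2 rfl
        · rw [hx, hy, descQ_neg]
          exact hP.null_swap_right _ _ _ ((hP.null_zero _ _).2 rfl)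
        · rw [hx, hy, descQ_neg]
          exact hP.null_swap_left _ _ _
            (hP.null_swap_right _ _ _ ((hP.null_zero _ _).2 rfl))}

def isColimit : Limits.IsColimit (cocone F) where
  desc := descHom F
  fac s j := PastureHom.ext' rfl
  uniq s m hm := by
    apply PastureHom.ext'
    funext q
    induction q using Quot.ind with
    | _ w =>
    induction w with
    | of j x =>
      have := congrArg PastureHom.toFun (hm j)
      exact congrFun this x
    | one => exact m.isHom.map_one
    | zero => exact m.isHom.map_zero
    | neg w ih =>
      have ih' : m.toFun (mk F w) = descFun F s w := ih
      have := m.isHom.map_neg (mk F w)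
      show m.toFun (negQ F (mk F w)) = descFun F s (Pre.neg w)
      calc m.toFun (negQ F (mk F w)) = s.pt.str.neg (m.toFun (mk F w)) := this
        _ = s.pt.str.neg (descFun F s w) := by rw [ih']
        _ = descFun F s (Pre.neg w) := rfl
    | mul w₁ w₂ ih₁ ih₂ =>
      have ih₁' : m.toFun (mk F w₁) = descFun F s w₁ := ih₁
      have ih₂' : m.toFun (mk F w₂) = descFun F s w₂ := ih₂
      have := m.isHom.map_mul (mk F w₁) (mk F w₂)
      show m.toFun (mulQ F (mk F w₁) (mk F w₂)) = descFun F s (Pre.mul w₁ w₂)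
      calc m.toFun (mulQ F (mk F w₁) (mk F w₂))
          = s.pt.str.mul (m.toFun (mk F w₁)) (m.toFun (mk F w₂)) := this
        _ = s.pt.str.mul (descFun F s w₁) (descFun F s w₂) := by rw [ih₁', ih₂']
        _ = descFun F s (Pre.mul w₁ w₂) := rfl

end PastureColim

end Colim

/-- **The category of pastures has all small colimits**: every functor from a
small category `J` into the category of pastures has a colimit. -/
theorem pastures_have_small_colimits (J : Type v) [CategoryTheory.SmallCategory J]
    (F : CategoryTheory.Functor J Pasture.{max u v}) :
    CategoryTheory.Limits.HasColimit F := by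
  exact CategoryTheory.Limits.HasColimit.mk
    ⟨PastureColim.cocone F, PastureColim.isColimit F⟩
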